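/- Let p > 3/2, let f ∈ E_p be nonzero, let q > 3 and φ ∈ Φ_q. For s ∈ (0, ‖f‖_{L^∞}), define the pseudo-inverse (f* ∘ a_φ)^{-1}(s) = sup{ e ∈ (inf φ, 0) : f*(a_φ(e)) > s }. Then (f* ∘ a_φ)^{-1} is nonincreasing from (0, ‖f‖_{L^∞}) to (inf φ, 0), and for all (x,v) ∈ ℝ³×ℝ³ and s ∈ (0, ‖f‖_{L^∞}): (i) if f^{*φ}(x,v) > s then √(1+|v|²) − 1 + φ(x) ≤ (f* ∘ a_φ)^{-1}(s); (ii) if f^{*φ}(x,v) ≤ s then √(1+|v|²) − 1 + φ(x) ≥ (f* ∘ a_φ)^{-1}(s). -/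

import Mathlib

noncomputable section

open MeasureTheory Real Set Filter Topology
open scoped ENNReal NNReal

/-- Physical space ℝ³. -/
abbrev Sp : Type := EuclideanSpace ℝ (Fin 3)

/-- Phase space ℝ³ × ℝ³. -/
abbrev Ph : Type := Sp × Sp

/-- The relativistic velocity weight √(1+|v|²). -/
def vW (v : Sp) : ℝ := Real.sqrt (1 + ‖v‖ ^ 2)

/-- The L¹ norm on phase space. -/
def L1n (f : Ph → ℝ) : ℝ := ∫ z : Ph, |f z|

/-- The L^p norm on phase space. -/
def Lpn (p : ℝ) (f : Ph → ℝ) : ℝ := (eLpNorm f (ENNReal.ofReal p) volume).toReal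

/-- The weighted norm ‖√(1+|v|²) f‖_{L¹}. -/
def kinN (f : Ph → ℝ) : ℝ := ∫ z : Ph, vW z.2 * |f z|

/-- Membership in the energy space E_p. -/
structure IsEp (p : ℝ) (f : Ph → ℝ) : Prop where
  nonneg : ∀ z, 0 ≤ f z
  meas : Measurable f
  l1 : Integrable f volume
  lp : MemLp f (ENNReal.ofReal p) volume
  kin : Integrable (fun z : Ph => vW z.2 * f z) volume

/-- The norm of the energy space E_p. -/
def EpNorm (p : ℝ) (f : Ph → ℝ) : ℝ := L1n f + Lpn p f + kinN f

/-- The spatial density ρ_f. -/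
def dens (f : Ph → ℝ) (x : Sp) : ℝ := ∫ v : Sp, f (x, v)

/-- The gravitational potential φ_f = -(1/4π) ∫ ρ_f(y)/|x-y| dy. -/
def pot (f : Ph → ℝ) (x : Sp) : ℝ := -(1 / (4 * π)) * ∫ y : Sp, dens f y / ‖x - y‖

/-- The L² norm of the gradient ‖∇φ‖_{L²}. -/
def gradL2 (φ : Sp → ℝ) : ℝ := (eLpNorm (gradient φ) 2 volume).toReal

/-- The L² norm of the difference of two gradients ‖∇φ - ∇ψ‖_{L²}. -/
def gradL2diff (φ ψ : Sp → ℝ) : ℝ :=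
  (eLpNorm (fun x => gradient φ x - gradient ψ x) 2 volume).toReal

/-- The Hamiltonian H(f). -/
def Ham (f : Ph → ℝ) : ℝ :=
  (∫ z : Ph, (vW z.2 - 1) * f z) - (1 / 2) * ∫ x : Sp, ‖gradient (pot f) x‖ ^ 2

/-- The distribution function μ_f(s) = meas{f > s}. -/
def distFun (f : Ph → ℝ) (s : ℝ) : ℝ≥0∞ := volume {z : Ph | s < f z}

/-- The Schwarz rearrangement f*(t) = inf{s ≥ 0 : μ_f(s) ≤ t}. -/
def schwarz (f : Ph → ℝ) (t : ℝ) : ℝ :=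
  sInf {s : ℝ | 0 ≤ s ∧ distFun f s ≤ ENNReal.ofReal t}

/-- m(φ) = inf_x (1+|x|)|φ(x)|. -/
def mPhi (φ : Sp → ℝ) : ℝ := ⨅ x : Sp, (1 + ‖x‖) * |φ x|

/-- Membership in the potential space Φ_q. -/
structure IsPhiq (q : ℝ) (φ : Sp → ℝ) : Prop where
  nonpos : ∀ x, φ x ≤ 0
  lq : MemLp φ (ENNReal.ofReal q) volume
  grad : MemLp (gradient φ) 2 volume
  zeroAtInfty : Tendsto φ (cocompact Sp) (𝓝 0)
  m_pos : 0 < mPhi φ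

/-- The L^q norm on ℝ³. -/
def Lqn (q : ℝ) (φ : Sp → ℝ) : ℝ := (eLpNorm φ (ENNReal.ofReal q) volume).toReal

/-- The microscopic energy e(x,v) = √(1+|v|²) - 1 + φ(x). -/
def microE (φ : Sp → ℝ) (z : Ph) : ℝ := vW z.2 - 1 + φ z.1

/-- The Jacobian a_φ(e), as an extended nonnegative real. -/
def aJacE (φ : Sp → ℝ) (e : ℝ) : ℝ≥0∞ := volume {z : Ph | microE φ z < e}

/-- The Jacobian a_φ(e) (real-valued). -/
def aJac (φ : Sp → ℝ) (e : ℝ) : ℝ := (aJacE φ e).toReal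

/-- The inverse a_φ^{-1}(s) of the Jacobian. -/
def aJacInv (φ : Sp → ℝ) (s : ℝ) : ℝ := sSup {e : ℝ | e < 0 ∧ aJac φ e < s}

/-- The essential infimum of φ, valued in EReal. -/
def essInfE (φ : Sp → ℝ) : EReal := essInf (fun x => (φ x : EReal)) volume

/-- The rearrangement f^{*φ} of f with respect to the microscopic energy of φ. -/
def rearr (f : Ph → ℝ) (φ : Sp → ℝ) (z : Ph) : ℝ :=
  if microE φ z < 0 then schwarz f (aJac φ (microE φ z)) else 0

/-- The reduced functional J(φ). -/
def Jfun (Q : Ph → ℝ) (φ : Sp → ℝ) : ℝ :=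
  (∫ z : Ph, microE φ z * rearr Q φ z) + (1 / 2) * ∫ x : Sp, ‖gradient φ x‖ ^ 2

/-- The kernel K(η) = (((1+η)₊² - 1)₊)^{1/2} (1+η). -/
def Kfun (η : ℝ) : ℝ := Real.sqrt (max ((max (1 + η) 0) ^ 2 - 1) 0) * (1 + η)

/-- Radial symmetry of a function on ℝ³. -/
def IsRadial (φ : Sp → ℝ) : Prop := ∀ x y : Sp, ‖x‖ = ‖y‖ → φ x = φ y

/-- The standing assumptions on the steady state Q. -/
structure IsSteadyState (Q : Ph → ℝ) (F : ℝ → ℝ) (eQ : ℝ) : Prop where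
  cont : Continuous Q
  nonneg : ∀ z, 0 ≤ Q z
  nonzero : Q ≠ 0
  cpt : HasCompactSupport Q
  radial : ∀ x v x' v' : Sp, ‖x‖ = ‖x'‖ → ‖v‖ = ‖v'‖ → Q (x, v) = Q (x', v')
  Fcont : Continuous F
  Fnonneg : ∀ e, 0 ≤ F e
  eQ_neg : eQ < 0
  Fzero : ∀ e, eQ ≤ e → F e = 0
  Fsmooth : ContDiffOn ℝ 1 F (Iio eQ)
  Fanti : StrictAntiOn F (Iio eQ)
  eqF : ∀ z : Ph, Q z = F (microE (pot Q) z)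

/-- The microscopic energy of the steady state: e_Q(x,v). -/
def eQfun (Q : Ph → ℝ) (z : Ph) : ℝ := microE (pot Q) z

/-- The projection Πh onto functions of the microscopic energy e_Q. -/
def PiProj (Q : Ph → ℝ) (h : Sp → ℝ) (z : Ph) : ℝ :=
  (∫ y : Sp, Kfun (eQfun Q z - pot Q y) * h y) / (∫ y : Sp, Kfun (eQfun Q z - pot Q y))

/-- The second derivative D²J(φ_Q)(h,h). -/
def D2J (Q : Ph → ℝ) (F : ℝ → ℝ) (h : Sp → ℝ) : ℝ :=
  (∫ x : Sp, ‖gradient h x‖ ^ 2) -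
    ∫ z : Ph, |deriv F (eQfun Q z)| * (h z.1 - PiProj Q h z) ^ 2

/-- The pseudo-inverse of f* ∘ a_φ. -/
def pseudoInv (f : Ph → ℝ) (φ : Sp → ℝ) (s : ℝ) : ℝ :=
  sSup {e : ℝ | essInfE φ < (e : EReal) ∧ e < 0 ∧ s < schwarz f (aJac φ e)}

/-- The L^∞ norm of f. -/
def Linf (f : Ph → ℝ) : ℝ := (eLpNorm f ⊤ volume).toReal

section Aux

lemma aux_vW_one_le (v : Sp) : 1 ≤ vW v := by
  have h := Real.sqrt_le_sqrt (show (1:ℝ) ≤ 1 + ‖v‖^2 by nlinarith [sq_nonneg ‖v‖])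
  simpa [vW] using h

lemma aux_norm_le_vW (v : Sp) : ‖v‖ ≤ vW v := by
  have h := Real.sqrt_le_sqrt (show ‖v‖^2 ≤ 1 + ‖v‖^2 by linarith)
  rw [Real.sqrt_sq (norm_nonneg v)] at h
  simpa [vW] using h

lemma aux_vW_le (v : Sp) : vW v ≤ 1 + ‖v‖^2/2 := by
  have h1 : 1 + ‖v‖^2 ≤ (1 + ‖v‖^2/2)^2 := by nlinarith [sq_nonneg (‖v‖^2)]
  calc vW v ≤ Real.sqrt ((1 + ‖v‖^2/2)^2) := Real.sqrt_le_sqrt h1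
  _ = 1 + ‖v‖^2/2 := Real.sqrt_sq (by positivity)

lemma aux_vW_cont : Continuous vW := by
  unfold vW; fun_prop

lemma aux_microE_meas {ψ : Sp → ℝ} (hψ : Measurable ψ) : Measurable (microE ψ) := by
  unfold microE
  exact ((aux_vW_cont.measurable.comp measurable_snd).sub measurable_const).add
    (hψ.comp measurable_fst)

lemma aux_ae_fst {φ ψ : Sp → ℝ} (h : φ =ᵐ[volume] ψ) :
    ∀ᵐ z : Ph ∂volume, φ z.1 = ψ z.1 := by
  rw [ae_iff]
  have hset : {z : Ph | ¬ φ z.1 = ψ z.1} = {x : Sp | ¬ φ x = ψ x} ×ˢ (univ : Set Sp) := by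
    ext ⟨x, v⟩; simp
  rw [hset, Measure.volume_eq_prod, Measure.prod_prod, ae_iff.mp h, zero_mul]

lemma aux_aJacE_congr {φ ψ : Sp → ℝ} (h : φ =ᵐ[volume] ψ) : aJacE φ = aJacE ψ := by
  funext e
  apply measure_congr
  rw [Filter.eventuallyEq_set]
  filter_upwards [aux_ae_fst h] with z hz
  simp [microE, hz]

lemma aux_essInfE_congr {φ ψ : Sp → ℝ} (h : φ =ᵐ[volume] ψ) : essInfE φ = essInfE ψ :=
  essInf_congr_ae (h.mono fun x hx => congrArg _ hx)

lemma aux_exists_mk (q : ℝ) {φ : Sp → ℝ} (hφ : IsPhiq q φ) :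
    ∃ ψ : Sp → ℝ, Measurable ψ ∧ φ =ᵐ[volume] ψ := by
  have h := hφ.lq.aestronglyMeasurable.aemeasurable
  exact ⟨h.mk φ, h.measurable_mk, h.ae_eq_mk⟩

lemma aux_phi_le {q : ℝ} {φ : Sp → ℝ} (hφ : IsPhiq q φ) (x : Sp) :
    φ x ≤ -(mPhi φ / (1 + ‖x‖)) := by
  have h1 : (0:ℝ) < 1 + ‖x‖ := by positivity
  have h2 : mPhi φ ≤ (1 + ‖x‖) * |φ x| := by
    refine ciInf_le ⟨0, ?_⟩ x
    rintro y ⟨x', rfl⟩; positivity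
  rw [abs_of_nonpos (hφ.nonpos x)] at h2
  have h3 : mPhi φ / (1 + ‖x‖) ≤ -φ x := (div_le_iff₀ h1).mpr (by linarith)
  linarith

lemma aux_essInfE_neg {q : ℝ} {φ : Sp → ℝ} (hφ : IsPhiq q φ) :
    essInfE φ ≤ ((-(mPhi φ)/2 : ℝ) : EReal) := by
  by_contra hcon
  push_neg at hcon
  have hev : ∀ᵐ x : Sp ∂volume, ((-(mPhi φ)/2 : ℝ) : EReal) < (φ x : EReal) :=
    Filter.eventually_lt_of_lt_liminf hcon
  have hball : Metric.ball (0:Sp) 1 ⊆ {x : Sp | ¬ ((-(mPhi φ)/2 : ℝ) : EReal) < (φ x : EReal)} := by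
    intro x hx
    simp only [Metric.mem_ball, dist_zero_right] at hx
    have h1 : φ x ≤ -(mPhi φ / (1 + ‖x‖)) := aux_phi_le hφ x
    have h2 : mPhi φ / 2 < mPhi φ / (1 + ‖x‖) := by
      apply div_lt_div_of_pos_left hφ.m_pos (by positivity) (by linarith)
    simp only [mem_setOf_eq, not_lt, EReal.coe_le_coe_iff]
    linarith
  have h0 : volume (Metric.ball (0:Sp) 1) = 0 :=
    measure_mono_null hball (ae_iff.mp hev)
  exact absurd h0 (Metric.measure_ball_pos volume _ one_pos).ne'

lemma aux_essInfE_lt0 {q : ℝ} {φ : Sp → ℝ} (hφ : IsPhiq q φ) : essInfE φ < (0 : EReal) := by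
  refine lt_of_le_of_lt (aux_essInfE_neg hφ) ?_
  have : (-(mPhi φ)/2 : ℝ) < 0 := by linarith [hφ.m_pos]
  exact_mod_cast this

end Aux
section Aux2

lemma aux_distFun_antitone (f : Ph → ℝ) {s s' : ℝ} (h : s ≤ s') :
    distFun f s' ≤ distFun f s :=
  measure_mono fun z hz => lt_of_le_of_lt h hz

lemma aux_schwarz_bddBelow (f : Ph → ℝ) (t : ℝ) :
    BddBelow {s : ℝ | 0 ≤ s ∧ distFun f s ≤ ENNReal.ofReal t} :=
  ⟨0, fun _ hb => hb.1⟩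

lemma aux_schwarz_le {f : Ph → ℝ} {s t : ℝ} (hs : 0 ≤ s)
    (h : distFun f s ≤ ENNReal.ofReal t) : schwarz f t ≤ s :=
  csInf_le (aux_schwarz_bddBelow f t) ⟨hs, h⟩

lemma aux_lt_distFun_of_lt_schwarz {f : Ph → ℝ} {s t : ℝ} (hs : 0 ≤ s)
    (h : s < schwarz f t) : ENNReal.ofReal t < distFun f s := by
  by_contra hcon
  push_neg at hcon
  exact absurd (aux_schwarz_le hs hcon) (not_le.mpr h)

lemma aux_exists_gt_distFun {f : Ph → ℝ} {s t : ℝ}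
    (h : ENNReal.ofReal t < distFun f s) :
    ∃ s', s < s' ∧ ENNReal.ofReal t < distFun f s' := by
  set A : ℕ → Set Ph := fun n => {z : Ph | s + 1/(n+1) < f z} with hA
  have hmono : Monotone A := by
    intro n k hnk z hz
    simp only [hA, mem_setOf_eq] at hz ⊢
    have : (1:ℝ)/(k+1) ≤ 1/(n+1) := by
      apply one_div_le_one_div_of_le (by positivity)
      exact_mod_cast by omega
    linarith
  have hunion : (⋃ n, A n) = {z : Ph | s < f z} := by
    ext z
    simp only [mem_iUnion, hA, mem_setOf_eq]
    constructor
    · rintro ⟨n, hn⟩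
      have : (0:ℝ) < 1/(n+1) := by positivity
      linarith
    · intro hz
      obtain ⟨n, hn⟩ := exists_nat_one_div_lt (show (0:ℝ) < f z - s by linarith)
      exact ⟨n, by linarith⟩
  have hsup : distFun f s = ⨆ n, volume (A n) := by
    rw [distFun, ← hunion, hmono.measure_iUnion]
  rw [hsup] at h
  obtain ⟨n, hn⟩ := lt_iSup_iff.mp h
  refine ⟨s + 1/(n+1), ?_, hn⟩
  have : (0:ℝ) < 1/(n+1) := by positivity
  linarith

lemma aux_hfin {f : Ph → ℝ} {s : ℝ} (hs : 0 < s) (hsL : s < Linf f) :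
    eLpNorm f ⊤ volume ≠ ⊤ := by
  intro hcon
  rw [Linf, hcon] at hsL
  simp at hsL
  linarith

lemma aux_Linf_mem {f : Ph → ℝ} (hnn : ∀ z, 0 ≤ f z)
    (hfin : eLpNorm f ⊤ volume ≠ ⊤) (t : ℝ) :
    Linf f ∈ {s : ℝ | 0 ≤ s ∧ distFun f s ≤ ENNReal.ofReal t} := by
  refine ⟨ENNReal.toReal_nonneg, ?_⟩
  have hae : ∀ᵐ z : Ph ∂volume, f z ≤ Linf f := by
    filter_upwards [ae_le_eLpNormEssSup (f := f) (μ := volume)] with z hz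
    have h1 : f z ≤ ‖f z‖ := le_abs_self _
    have h2 : ‖f z‖ ≤ Linf f := by
      rw [Linf, eLpNorm_exponent_top]
      rw [← coe_nnnorm]
      exact_mod_cast ENNReal.toReal_mono (by rw [← eLpNorm_exponent_top]; exact hfin) hz
    linarith
  have h0 : distFun f (Linf f) = 0 := by
    rw [distFun]
    have := ae_iff.mp hae
    convert this using 2
    ext z; simp [not_le]
  rw [h0]; exact zero_le

lemma aux_lt_schwarz {f : Ph → ℝ} (hnn : ∀ z, 0 ≤ f z)
    (hfin : eLpNorm f ⊤ volume ≠ ⊤) {s t : ℝ}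
    (h : ENNReal.ofReal t < distFun f s) : s < schwarz f t := by
  obtain ⟨s', hss', hs'⟩ := aux_exists_gt_distFun h
  have hge : s' ≤ schwarz f t := by
    apply le_csInf ⟨Linf f, aux_Linf_mem hnn hfin t⟩
    intro b hb
    by_contra hcon
    push_neg at hcon
    have := aux_distFun_antitone f hcon.le
    exact absurd (lt_of_lt_of_le hs' (this.trans hb.2)) (lt_irrefl _)
  linarith

lemma aux_distFun_pos {f : Ph → ℝ} (hnn : ∀ z, 0 ≤ f z) {s : ℝ} (hs : 0 ≤ s) (hsL : s < Linf f) :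
    0 < distFun f s := by
  by_contra hcon
  push_neg at hcon
  have h0 : distFun f s = 0 := le_antisymm hcon zero_le
  have hae : ∀ᵐ z : Ph ∂volume, ¬ (s < f z) := by
    rw [ae_iff]; simpa [distFun] using h0
  have hbound : eLpNorm f ⊤ volume ≤ ENNReal.ofReal s := by
    rw [eLpNorm_exponent_top, eLpNormEssSup]
    refine essSup_le_of_ae_le _ ?_
    filter_upwards [hae] with z hz
    push_neg at hz
    calc (‖f z‖₊ : ℝ≥0∞) = ENNReal.ofReal ‖f z‖ := (ofReal_norm_eq_enorm _).symm
    _ ≤ ENNReal.ofReal s := by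
        apply ENNReal.ofReal_le_ofReal
        rw [Real.norm_eq_abs, abs_le]
        exact ⟨by linarith [hnn z], hz⟩
  have : Linf f ≤ s := by
    rw [Linf]
    calc (eLpNorm f ⊤ volume).toReal ≤ (ENNReal.ofReal s).toReal :=
      ENNReal.toReal_mono ENNReal.ofReal_ne_top hbound
    _ = s := ENNReal.toReal_ofReal hs
  linarith

lemma aux_distFun_lt_top {f : Ph → ℝ} (hl1 : Integrable f volume) {s : ℝ} (hs : 0 < s) :
    distFun f s < ⊤ := by
  have hsub : {z : Ph | s < f z} ⊆ {z : Ph | ENNReal.ofReal s ≤ (‖f z‖₊ : ℝ≥0∞)} := by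
    intro z hz
    simp only [mem_setOf_eq] at hz ⊢
    rw [← enorm_eq_nnnorm, ← ofReal_norm_eq_enorm]
    apply ENNReal.ofReal_le_ofReal
    rw [Real.norm_eq_abs]
    exact (le_abs_self _).trans' hz.le
  calc distFun f s ≤ volume {z : Ph | ENNReal.ofReal s ≤ (‖f z‖₊ : ℝ≥0∞)} := measure_mono hsub
  _ ≤ (∫⁻ z, (‖f z‖₊ : ℝ≥0∞) ∂volume) / ENNReal.ofReal s := by
      apply meas_ge_le_lintegral_div hl1.aestronglyMeasurable.aemeasurable.enorm
      · exact (ENNReal.ofReal_pos.mpr hs).ne'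
      · exact ENNReal.ofReal_ne_top
  _ < ⊤ := ENNReal.div_lt_top hl1.2.ne (ENNReal.ofReal_pos.mpr hs).ne'

end Aux2
section Aux3

lemma aux_aJacE_mono (φ : Sp → ℝ) {e e' : ℝ} (h : e ≤ e') : aJacE φ e ≤ aJacE φ e' :=
  measure_mono fun z hz => lt_of_lt_of_le hz h

lemma aux_aJacE_lt_top {q : ℝ} (hq : 3 < q) {φ : Sp → ℝ} (hφ : IsPhiq q φ) {e : ℝ}
    (he : e < 0) : aJacE φ e < ⊤ := by
  obtain ⟨ψ, hψm, hψae⟩ := aux_exists_mk q hφ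
  rw [aux_aJacE_congr hψae]
  set δ := -e with hδdef
  have hδ : 0 < δ := by linarith
  set V := volume (Metric.ball (0:Sp) 1) with hV
  have hVlt : V < ⊤ := measure_ball_lt_top
  set C : ℝ := (1 + δ⁻¹)^3 * δ ^ (3 - q) with hC
  have hC0 : 0 ≤ C := by positivity
  have hq0 : (0:ℝ) ≤ q := by linarith
  have hsec : ∀ x : Sp, volume {v : Sp | microE ψ (x, v) < e}
      ≤ ENNReal.ofReal C * (‖ψ x‖₊ : ℝ≥0∞) ^ q * V := by
    intro x
    by_cases hx : ψ x < e
    · have hsub : {v : Sp | microE ψ (x, v) < e} ⊆ Metric.ball (0:Sp) (1 - ψ x) := by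
        intro v hv
        simp only [mem_setOf_eq, microE] at hv
        have h1 := aux_norm_le_vW v
        simp only [Metric.mem_ball, dist_zero_right]
        linarith
      refine le_trans (measure_mono hsub) ?_
      rw [Measure.addHaar_ball volume _ (by linarith : (0:ℝ) ≤ 1 - ψ x),
        finrank_euclideanSpace_fin]
      refine mul_le_mul_left ?_ V
      have habs : (‖ψ x‖₊ : ℝ≥0∞) ^ q = ENNReal.ofReal (|ψ x| ^ q) := by
        rw [← enorm_eq_nnnorm, Real.enorm_eq_ofReal_abs, ENNReal.ofReal_rpow_of_nonneg (abs_nonneg _) hq0]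
      rw [habs, ← ENNReal.ofReal_mul hC0]
      apply ENNReal.ofReal_le_ofReal
      set t := |ψ x| with ht
      have htψ : ψ x = -t := by rw [ht, abs_of_nonpos (by linarith : ψ x ≤ 0)]; ring
      have hδt : δ ≤ t := by rw [ht, abs_of_nonpos (by linarith : ψ x ≤ 0)]; linarith
      have ht0 : 0 < t := lt_of_lt_of_le hδ hδt
      have step1 : (1 - ψ x)^3 ≤ (1 + δ⁻¹)^3 * t^3 := by
        have h1' : (1:ℝ) ≤ t / δ := (one_le_div hδ).mpr hδt
        have h1'' : (1:ℝ) ≤ t * δ⁻¹ := by rwa [div_eq_mul_inv] at h1'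
        have h1t : 1 - ψ x ≤ (1 + δ⁻¹) * t := by rw [htψ]; nlinarith
        have h2t : (1 - ψ x)^3 ≤ ((1 + δ⁻¹) * t)^3 :=
          pow_le_pow_left₀ (by linarith) h1t 3
        have h3t : ((1 + δ⁻¹) * t)^3 = (1 + δ⁻¹)^3 * t^3 := by ring
        linarith
      have step2 : t^3 ≤ δ ^ (3 - q) * t ^ q := by
        have e1 : t^(3:ℕ) = t ^ ((3:ℝ)) := by
          rw [show (3:ℝ) = ((3:ℕ):ℝ) by norm_num, Real.rpow_natCast]
        have e2 : t ^ (3:ℝ) = t ^ q * t ^ (3 - q) := by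
          rw [← Real.rpow_add ht0]; ring_nf
        have e3 : t ^ (3 - q) ≤ δ ^ (3 - q) :=
          Real.rpow_le_rpow_of_nonpos hδ hδt (by linarith)
        have e4 : t ^ q * t ^ (3-q) ≤ t ^ q * δ ^ (3-q) :=
          mul_le_mul_of_nonneg_left e3 (Real.rpow_nonneg ht0.le q)
        have e5 : t ^ q * δ ^ (3-q) = δ ^ (3-q) * t ^ q := by ring
        rw [e1, e2]
        linarith
      have step3 : (1 + δ⁻¹)^3 * t^3 ≤ (1 + δ⁻¹)^3 * (δ ^ (3-q) * t ^ q) :=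
        mul_le_mul_of_nonneg_left step2 (by positivity)
      have step4 : (1 + δ⁻¹)^3 * (δ ^ (3-q) * t ^ q) = C * t ^ q := by rw [hC]; ring
      linarith
    · have hempty : {v : Sp | microE ψ (x, v) < e} = ∅ := by
        ext v
        simp only [mem_setOf_eq, microE, mem_empty_iff_false, iff_false, not_lt]
        have := aux_vW_one_le v
        push_neg at hx
        linarith
      rw [hempty, measure_empty]
      exact zero_le
  have hmeas : MeasurableSet {z : Ph | microE ψ z < e} :=
    measurableSet_lt (aux_microE_meas hψm) measurable_const
  have hψq : Measurable fun x => (‖ψ x‖₊ : ℝ≥0∞) ^ q :=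
    ENNReal.continuous_rpow_const.measurable.comp hψm.enorm
  have hint : (∫⁻ x, (‖ψ x‖₊ : ℝ≥0∞) ^ q) < ⊤ := by
    have heq : eLpNorm ψ (ENNReal.ofReal q) volume < ⊤ := by
      rw [← eLpNorm_congr_ae hψae]
      exact hφ.lq.2
    have h := lintegral_rpow_enorm_lt_top_of_eLpNorm_lt_top
      (p := ENNReal.ofReal q) (f := ψ)
      (by simp only [ne_eq, ENNReal.ofReal_eq_zero, not_le]; linarith)
      ENNReal.ofReal_ne_top heq
    rwa [ENNReal.toReal_ofReal hq0] at h
  have hcalc1 : aJacE ψ e = ∫⁻ x, volume {v : Sp | microE ψ (x, v) < e} := by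
    rw [aJacE, Measure.volume_eq_prod, Measure.prod_apply hmeas]
    rfl
  have hcalc2 : (∫⁻ x, volume {v : Sp | microE ψ (x, v) < e})
      ≤ ∫⁻ x, ENNReal.ofReal C * (‖ψ x‖₊ : ℝ≥0∞) ^ q * V := lintegral_mono hsec
  have hcalc3 : (∫⁻ x, ENNReal.ofReal C * (‖ψ x‖₊ : ℝ≥0∞) ^ q * V)
      = ENNReal.ofReal C * (∫⁻ x, (‖ψ x‖₊ : ℝ≥0∞) ^ q) * V := by
    rw [lintegral_mul_const _ (hψq.const_mul _), lintegral_const_mul _ hψq]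
  rw [hcalc1]
  apply lt_of_le_of_lt hcalc2
  rw [hcalc3]
  exact ENNReal.mul_lt_top (ENNReal.mul_lt_top ENNReal.ofReal_lt_top hint) hVlt

lemma aux_aJac_mono {q : ℝ} (hq : 3 < q) {φ : Sp → ℝ} (hφ : IsPhiq q φ) {e e' : ℝ}
    (he' : e' < 0) (h : e ≤ e') : aJac φ e ≤ aJac φ e' :=
  ENNReal.toReal_mono (aux_aJacE_lt_top hq hφ he').ne (aux_aJacE_mono φ h)

end Aux3
section Aux4

lemma aux_aJacE_big {q : ℝ} {φ : Sp → ℝ} (hφ : IsPhiq q φ) (T : ℝ) :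
    ∃ e₀ : ℝ, e₀ < 0 ∧ ∀ e, e₀ ≤ e → ENNReal.ofReal T ≤ aJacE φ e := by
  set m := mPhi φ with hmdef
  have hm : 0 < m := hφ.m_pos
  set V := volume (Metric.ball (0:Sp) 1) with hV
  have hV0 : 0 < V := Metric.measure_ball_pos volume _ one_pos
  have hVt : V ≠ ⊤ := measure_ball_lt_top.ne
  set v₀ := V.toReal with hv₀def
  have hv₀ : 0 < v₀ := ENNReal.toReal_pos hV0.ne' hVt
  set T' := max T 1 with hT'def
  have hT' : 0 < T' := lt_of_lt_of_le one_pos (le_max_right _ _)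
  set c := m^3 * v₀^2 / (8 * T') with hcdef
  have hc : 0 < c := by positivity
  set r := min (Real.sqrt (m/2)) (min 1 (c ^ (3⁻¹:ℝ))) with hrdef
  have hr : 0 < r := by
    apply lt_min (Real.sqrt_pos.mpr (by linarith))
    exact lt_min one_pos (Real.rpow_pos_of_pos hc _)
  have hr2 : r^2 ≤ m/2 := by
    have h1 : r ≤ Real.sqrt (m/2) := min_le_left _ _
    have h2 : r^2 ≤ Real.sqrt (m/2)^2 := pow_le_pow_left₀ hr.le h1 2
    rwa [Real.sq_sqrt (by linarith : (0:ℝ) ≤ m/2)] at h2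
  have hr3 : r^3 ≤ c := by
    have h1 : r ≤ c ^ (3⁻¹:ℝ) := le_trans (min_le_right _ _) (min_le_right _ _)
    have h2 : r^3 ≤ (c ^ (3⁻¹:ℝ))^(3:ℕ) := pow_le_pow_left₀ hr.le h1 3
    have h3 : (c ^ (3⁻¹:ℝ))^(3:ℕ) = c := by
      rw [← Real.rpow_natCast (c ^ (3⁻¹:ℝ)) 3, ← Real.rpow_mul hc.le]
      norm_num
    rwa [h3] at h2
  set R := m / r^2 - 1 with hRdef
  have hr20 : (0:ℝ) < r^2 := by positivity
  have h2m : 2 ≤ m / r^2 := by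
    rw [le_div_iff₀ hr20]
    linarith
  have hR1 : 1 ≤ R := by
    rw [hRdef]
    linarith
  have hRr : 1 + R = m / r^2 := by rw [hRdef]; ring
  set e₀ := -(r^2/2) with he₀def
  have he₀ : e₀ < 0 := by rw [he₀def]; linarith
  refine ⟨e₀, he₀, ?_⟩
  have hsub : (Metric.ball (0:Sp) R) ×ˢ (Metric.ball (0:Sp) r) ⊆
      {z : Ph | microE φ z < e₀} := by
    rintro ⟨x, v⟩ ⟨hx, hv⟩
    simp only [Metric.mem_ball, dist_zero_right] at hx hv
    have h1 : vW v ≤ 1 + ‖v‖^2/2 := aux_vW_le v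
    have h2 : φ x ≤ -(m / (1+‖x‖)) := aux_phi_le hφ x
    have h3 : m / (1+R) < m / (1+‖x‖) := by
      apply div_lt_div_of_pos_left hm (by positivity) (by linarith)
    have h4 : m / (1+R) = r^2 := by
      rw [hRr]
      field_simp
    have h5 : ‖v‖^2 < r^2 := by nlinarith [norm_nonneg v]
    show vW v - 1 + φ x < e₀
    rw [he₀def]
    linarith
  have hprod : ENNReal.ofReal T ≤
      volume ((Metric.ball (0:Sp) R) ×ˢ (Metric.ball (0:Sp) r)) := by
    rw [Measure.volume_eq_prod, Measure.prod_prod,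
      Measure.addHaar_ball volume _ (by linarith : (0:ℝ) ≤ R),
      Measure.addHaar_ball volume _ hr.le, finrank_euclideanSpace_fin]
    rw [show volume (Metric.ball (0:Sp) 1) = ENNReal.ofReal v₀ from
      (ENNReal.ofReal_toReal hVt).symm, ← ENNReal.ofReal_mul (by positivity : (0:ℝ) ≤ R^3),
      ← ENNReal.ofReal_mul (by positivity : (0:ℝ) ≤ r^3),
      ← ENNReal.ofReal_mul (by positivity : (0:ℝ) ≤ R^3 * v₀)]
    apply ENNReal.ofReal_le_ofReal
    have hRc : m/(2*r^2) ≤ R := by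
      have h1 : (1:ℝ) ≤ m/(2*r^2) := by
        rw [le_div_iff₀ (by positivity)]
        nlinarith
      have h2 : m/(2*r^2) + m/(2*r^2) = m/r^2 := by field_simp; ring
      rw [hRdef]
      linarith
    have hkey : T' ≤ R^3 * r^3 * v₀^2 := by
      have e1 : (m/(2*r^2))^3 ≤ R^3 := pow_le_pow_left₀ (by positivity) hRc 3
      have e2 : (m/(2*r^2))^3 * r^3 * v₀^2 ≤ R^3 * r^3 * v₀^2 := by
        apply mul_le_mul_of_nonneg_right _ (by positivity)
        exact mul_le_mul_of_nonneg_right e1 (by positivity)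
      have e3 : (m/(2*r^2))^3 * r^3 * v₀^2 = m^3*v₀^2/(8*r^3) := by
        field_simp
        ring
      have e4 : m^3*v₀^2/(8*c) ≤ m^3*v₀^2/(8*r^3) := by
        apply div_le_div_of_nonneg_left (by positivity) (by positivity)
        linarith
      have e5 : m^3*v₀^2/(8*c) = T' := by
        rw [hcdef]
        field_simp
      calc T' = m^3*v₀^2/(8*c) := e5.symm
      _ ≤ m^3*v₀^2/(8*r^3) := e4
      _ = (m/(2*r^2))^3 * r^3 * v₀^2 := e3.symm
      _ ≤ R^3*r^3*v₀^2 := e2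
    have hTT' : T ≤ T' := le_max_left _ _
    calc T ≤ T' := hTT'
    _ ≤ R^3*r^3*v₀^2 := hkey
    _ = R ^ 3 * v₀ * (r ^ 3 * v₀) := by ring
  intro e he
  refine le_trans hprod (le_trans (measure_mono hsub) ?_)
  exact aux_aJacE_mono φ he

end Aux4
section Aux5

lemma aux_v_eq_zero_of_vW_le_one {v : Sp} (h : vW v ≤ 1) : v = 0 := by
  rw [vW] at h
  have h4 : 1 + ‖v‖^2 ≤ 1 := by
    nlinarith [Real.sq_sqrt (show (0:ℝ) ≤ 1+‖v‖^2 by positivity),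
      Real.sqrt_nonneg (1+‖v‖^2)]
  have h2 : ‖v‖ = 0 := le_antisymm (by nlinarith) (norm_nonneg v)
  exact norm_eq_zero.mp h2

lemma aux_aJacE_small {q : ℝ} (hq : 3 < q) {φ : Sp → ℝ} (hφ : IsPhiq q φ)
    {δ : ℝ≥0∞} (hδ : 0 < δ) :
    ∃ e : ℝ, essInfE φ < (e : EReal) ∧ e < 0 ∧ aJacE φ e < δ := by
  obtain ⟨ψ, hψm, hψae⟩ := aux_exists_mk q hφ
  have hJ : aJacE φ = aJacE ψ := aux_aJacE_congr hψae
  have hE : essInfE φ = essInfE ψ := aux_essInfE_congr hψae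
  have hLneg : essInfE ψ ≤ ((-(mPhi φ)/2 : ℝ) : EReal) := hE ▸ aux_essInfE_neg hφ
  have hLtop : essInfE ψ ≠ ⊤ := ne_top_of_le_ne_top (EReal.coe_ne_top _) hLneg
  by_cases hbot : essInfE ψ = ⊥
  · set S : ℕ → Set Ph := fun n => {z : Ph | microE ψ z < -(1+(n:ℝ))} with hS
    have hanti : Antitone S := by
      intro n k hnk z hz
      simp only [hS, mem_setOf_eq] at hz ⊢
      have hcast : ((n:ℝ)) ≤ (k:ℝ) := by exact_mod_cast hnk
      linarith
    have hmeasS : ∀ n, NullMeasurableSet (S n) volume := fun n =>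
      (measurableSet_lt (aux_microE_meas hψm) measurable_const).nullMeasurableSet
    have hfinS : ∃ n, volume (S n) ≠ ⊤ := by
      refine ⟨0, ?_⟩
      have h1 := aux_aJacE_lt_top hq hφ (show -(1+((0:ℕ):ℝ)) < 0 by norm_num)
      rw [hJ] at h1
      exact h1.ne
    have hinter : ⋂ n, S n = ∅ := by
      ext z
      simp only [mem_iInter, hS, mem_setOf_eq, mem_empty_iff_false, iff_false]
      push_neg
      obtain ⟨n, hn⟩ := exists_nat_ge (-(microE ψ z))
      exact ⟨n, by linarith⟩
    have h0 : (⨅ n, volume (S n)) = 0 := by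
      rw [← hanti.measure_iInter hmeasS hfinS, hinter, measure_empty]
    obtain ⟨n, hn⟩ := iInf_lt_iff.mp (lt_of_le_of_lt h0.le hδ)
    refine ⟨-(1+(n:ℝ)), ?_, ?_, ?_⟩
    · rw [hE, hbot]
      exact EReal.bot_lt_coe _
    · have : (0:ℝ) ≤ n := Nat.cast_nonneg n
      linarith
    · rw [hJ]
      exact hn
  · have hcoe : essInfE ψ = (((essInfE ψ).toReal : ℝ) : EReal) :=
      (EReal.coe_toReal hLtop hbot).symm
    set m₀ := (essInfE ψ).toReal with hm₀def
    have hm₀ : m₀ ≤ -(mPhi φ)/2 := by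
      rw [hcoe] at hLneg
      exact_mod_cast hLneg
    have hm₀neg : m₀ < 0 := lt_of_le_of_lt hm₀ (by linarith [hφ.m_pos])
    set ε : ℕ → ℝ := fun n => min (1/((n:ℝ)+1)) (-m₀/2) with hε
    have hεpos : ∀ n, 0 < ε n := fun n => lt_min (by positivity) (by linarith)
    have hεle : ∀ n, ε n ≤ 1/((n:ℝ)+1) := fun n => min_le_left _ _
    set S : ℕ → Set Ph := fun n => {z : Ph | microE ψ z < m₀ + ε n} with hS
    have hen : ∀ n, m₀ + ε n < 0 := by
      intro n
      have h1 : ε n ≤ -m₀/2 := min_le_right _ _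
      linarith
    have hanti : Antitone S := by
      intro n k hnk z hz
      simp only [hS, mem_setOf_eq] at hz ⊢
      have h1 : ε k ≤ ε n := by
        apply min_le_min _ le_rfl
        apply one_div_le_one_div_of_le (by positivity)
        have : ((n:ℝ)) ≤ (k:ℝ) := by exact_mod_cast hnk
        linarith
      linarith
    have hmeasS : ∀ n, NullMeasurableSet (S n) volume := fun n =>
      (measurableSet_lt (aux_microE_meas hψm) measurable_const).nullMeasurableSet
    have hfinS : ∃ n, volume (S n) ≠ ⊤ := by
      refine ⟨0, ?_⟩
      have h1 := aux_aJacE_lt_top hq hφ (hen 0)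
      rw [hJ] at h1
      exact h1.ne
    have hNx : volume {x : Sp | ψ x < m₀} = 0 := by
      have hsub : {x : Sp | ψ x < m₀} ⊆ ⋃ k : ℕ, {x : Sp | ψ x ≤ m₀ - 1/((k:ℝ)+1)} := by
        intro x hx
        simp only [mem_setOf_eq] at hx
        obtain ⟨k, hk⟩ := exists_nat_one_div_lt (show 0 < m₀ - ψ x by linarith)
        exact mem_iUnion.mpr ⟨k, by simp only [mem_setOf_eq]; linarith⟩
      apply measure_mono_null hsub
      apply measure_iUnion_null
      intro k
      have hlt : ((m₀ - 1/((k:ℝ)+1) : ℝ) : EReal) < essInfE ψ := by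
        rw [hcoe]
        have h1 : (0:ℝ) < 1/((k:ℝ)+1) := by positivity
        exact_mod_cast (show m₀ - 1/((k:ℝ)+1) < m₀ by linarith)
      have hev : ∀ᵐ x : Sp ∂volume, ((m₀ - 1/((k:ℝ)+1) : ℝ) : EReal) < ((ψ x : ℝ) : EReal) :=
        Filter.eventually_lt_of_lt_liminf hlt
      apply measure_mono_null _ (ae_iff.mp hev)
      intro x hx
      simp only [mem_setOf_eq] at hx ⊢
      exact not_lt.mpr (EReal.coe_le_coe_iff.mpr hx)
    have hker : volume {z : Ph | microE ψ z ≤ m₀} = 0 := by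
      have hsub : {z : Ph | microE ψ z ≤ m₀} ⊆
          ({x : Sp | ψ x < m₀} ×ˢ (univ : Set Sp)) ∪ ((univ : Set Sp) ×ˢ ({0} : Set Sp)) := by
        rintro ⟨x, v⟩ hz
        simp only [mem_setOf_eq, microE] at hz
        have h1 := aux_vW_one_le v
        by_cases hx : ψ x < m₀
        · exact Or.inl ⟨hx, mem_univ _⟩
        · push_neg at hx
          refine Or.inr ⟨mem_univ _, ?_⟩
          have hvw : vW v ≤ 1 := by linarith
          simp [aux_v_eq_zero_of_vW_le_one hvw]
      apply measure_mono_null hsub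
      apply measure_union_null
      · rw [Measure.volume_eq_prod, Measure.prod_prod, hNx, zero_mul]
      · rw [Measure.volume_eq_prod, Measure.prod_prod]
        simp
    have hinter : volume (⋂ n, S n) = 0 := by
      apply measure_mono_null _ hker
      intro z hz
      simp only [mem_iInter, hS, mem_setOf_eq] at hz ⊢
      by_contra hcon
      push_neg at hcon
      obtain ⟨n, hn⟩ := exists_nat_one_div_lt (show 0 < microE ψ z - m₀ by linarith)
      have h2 := hz n
      have h3 := hεle n
      linarith
    have h0 : (⨅ n, volume (S n)) = 0 := by
      rw [← hanti.measure_iInter hmeasS hfinS, hinter]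
    obtain ⟨n, hn⟩ := iInf_lt_iff.mp (lt_of_le_of_lt h0.le hδ)
    refine ⟨m₀ + ε n, ?_, hen n, ?_⟩
    · rw [hE, hcoe]
      exact_mod_cast (show m₀ < m₀ + ε n by linarith [hεpos n])
    · rw [hJ]
      exact hn

end Aux5
/-- properties of the pseudo-inverse of f* ∘ a_φ. -/
theorem stmt13 (p : ℝ) (hp : 3 / 2 < p) (f : Ph → ℝ) (hf : IsEp p f) (hne : f ≠ 0)
    (q : ℝ) (hq : 3 < q) (φ : Sp → ℝ) (hφ : IsPhiq q φ) :
    (∀ s₁ s₂ : ℝ, 0 < s₁ → s₁ ≤ s₂ → s₂ < Linf f →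
      pseudoInv f φ s₂ ≤ pseudoInv f φ s₁) ∧
    (∀ s : ℝ, 0 < s → s < Linf f →
      essInfE φ < (pseudoInv f φ s : EReal) ∧ pseudoInv f φ s < 0) ∧
    ∀ z : Ph, ∀ s : ℝ, 0 < s → s < Linf f →
      (s < rearr f φ z → microE φ z ≤ pseudoInv f φ s) ∧
      (rearr f φ z ≤ s → pseudoInv f φ s ≤ microE φ z) := by
  have hnn := hf.nonneg
  set A : ℝ → Set ℝ :=
    fun s => {e : ℝ | essInfE φ < (e : EReal) ∧ e < 0 ∧ s < schwarz f (aJac φ e)} with hA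
  have hpseudo : ∀ s, pseudoInv f φ s = sSup (A s) := fun s => rfl
  have hbdd : ∀ s : ℝ, BddAbove (A s) := fun s => ⟨0, fun e he => he.2.1.le⟩
  have hAne : ∀ s : ℝ, 0 < s → s < Linf f → (A s).Nonempty := by
    intro s hs hsL
    have hfin := aux_hfin hs hsL
    have hd := aux_distFun_pos hnn hs.le hsL
    have hδ : (0:ℝ≥0∞) < min (distFun f s) 1 := lt_min hd zero_lt_one
    obtain ⟨e, h1, h2, h3⟩ := aux_aJacE_small hq hφ hδ
    have hfin2 : aJacE φ e ≠ ⊤ :=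
      ((lt_of_lt_of_le h3 (min_le_right _ _)).trans ENNReal.one_lt_top).ne
    have hlt : ENNReal.ofReal (aJac φ e) < distFun f s := by
      rw [aJac, ENNReal.ofReal_toReal hfin2]
      exact lt_of_lt_of_le h3 (min_le_left _ _)
    exact ⟨e, h1, h2, aux_lt_schwarz hnn hfin hlt⟩
  refine ⟨?_, ?_, ?_⟩
  · intro s₁ s₂ hs1 h12 hsL
    rw [hpseudo, hpseudo]
    apply csSup_le_csSup (hbdd s₁) (hAne s₂ (lt_of_lt_of_le hs1 h12) hsL)
    intro e he
    exact ⟨he.1, he.2.1, lt_of_le_of_lt h12 he.2.2⟩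
  · intro s hs hsL
    constructor
    · obtain ⟨e, he⟩ := hAne s hs hsL
      have h1 : e ≤ pseudoInv f φ s := le_csSup (hbdd s) he
      exact lt_of_lt_of_le he.1 (EReal.coe_le_coe_iff.mpr h1)
    · have hfin := aux_hfin hs hsL
      have hdlt := aux_distFun_lt_top hf.l1 hs
      have hT : distFun f s ≤ ENNReal.ofReal ((distFun f s).toReal + 1) := by
        conv_lhs => rw [← ENNReal.ofReal_toReal hdlt.ne]
        exact ENNReal.ofReal_le_ofReal (by linarith)
      obtain ⟨e₀, he₀, hbig⟩ := aux_aJacE_big hφ ((distFun f s).toReal + 1)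
      have hub : ∀ e ∈ A s, e ≤ e₀ := by
        intro e he
        by_contra hcon
        push_neg at hcon
        have h1 := hbig e hcon.le
        have h2 : aJacE φ e ≠ ⊤ := (aux_aJacE_lt_top hq hφ he.2.1).ne
        have h3 : distFun f s ≤ ENNReal.ofReal (aJac φ e) := by
          rw [aJac, ENNReal.ofReal_toReal h2]
          exact hT.trans h1
        exact absurd (aux_schwarz_le hs.le h3) (not_le.mpr he.2.2)
      rw [hpseudo]
      exact lt_of_le_of_lt (csSup_le (hAne s hs hsL) hub) he₀
  · rintro z s hs hsL
    have hfin := aux_hfin hs hsL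
    constructor
    · intro hrz
      by_cases hz : microE φ z < 0
      · simp only [rearr, if_pos hz] at hrz
        by_cases hL : essInfE φ < ((microE φ z : ℝ) : EReal)
        · exact le_csSup (hbdd s) ⟨hL, hz, hrz⟩
        · push_neg at hL
          obtain ⟨e', he'⟩ := hAne s hs hsL
          have h1 : ((microE φ z : ℝ) : EReal) < (e' : EReal) := lt_of_le_of_lt hL he'.1
          have h2 : microE φ z < e' := EReal.coe_lt_coe_iff.mp h1
          exact h2.le.trans (le_csSup (hbdd s) he')
      · simp only [rearr, if_neg hz] at hrz
        linarith
    · intro hrz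
      rw [hpseudo]
      apply csSup_le (hAne s hs hsL)
      intro e he
      by_contra hcon
      push_neg at hcon
      have hz : microE φ z < 0 := hcon.trans he.2.1
      simp only [rearr, if_pos hz] at hrz
      have h1 : ENNReal.ofReal (aJac φ e) < distFun f s :=
        aux_lt_distFun_of_lt_schwarz hs.le he.2.2
      have h2 : aJac φ (microE φ z) ≤ aJac φ e := aux_aJac_mono hq hφ he.2.1 hcon.le
      have h3 : ENNReal.ofReal (aJac φ (microE φ z)) < distFun f s :=
        lt_of_le_of_lt (ENNReal.ofReal_le_ofReal h2) h1
      exact absurd (aux_lt_schwarz hnn hfin h3) (not_lt.mpr hrz)
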